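/- Let U be a connected open subset of ℝⁿ with n ≥ 4, ω a smooth differential 2-form on U, and suppose the set of points where ω ∧ ω = 0 (i.e. where the rank of ω is at most 1) is nowhere dense in U. If β and β' are continuous differential 1-forms on U with β ∧ ω = β' ∧ ω, then β = β'. In particular, a 1-form β satisfying dω = β ∧ ω is unique. -/

import Mathlib

set_option synthInstance.maxHeartbeats 1000000
set_option maxHeartbeats 1000000

noncomputable section

open ExteriorAlgebra

/-! ### Preamble: differential forms on open subsets of `ℝⁿ`

A (inhomogeneous) differential form on (an open subset of) `ℝⁿ` is modelled as a map from
`ℝⁿ = Fin n → ℝ` into the exterior algebra `ExteriorAlgebra ℝ (Module.Dual ℝ (Fin n → ℝ))`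
of the dual space; a differential `k`-form takes values in the `k`-th exterior power
`⋀[ℝ]^k (Module.Dual ℝ (Fin n → ℝ))`.  The wedge product is multiplication in the exterior
algebra.  To speak about continuity and differentiability we endow this (finite-dimensional)
exterior algebra with a norm, induced by a linear equivalence with `ℝ^d`; all norms on a
finite-dimensional real vector space are equivalent, so the resulting notions of continuous
and smooth differential forms do not depend on this choice.  The exterior derivative is
defined by the classical coordinate formula `dω = ∑ᵢ dxⁱ ∧ ∂ᵢω`. -/

/-- The `i`-th exterior power of a finite-dimensional space vanishes for `i` larger
than the dimension. -/
theorem exteriorPower_eq_bot_of_finrank_lt {V : Type*} [AddCommGroup V] [Module ℝ V]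
    [FiniteDimensional ℝ V] {i : ℕ} (hi : Module.finrank ℝ V < i) :
    ⋀[ℝ]^i V = ⊥ := by
  rw [← ιMulti_span_fixedDegree, Submodule.span_eq_bot]
  rintro x ⟨v, rfl⟩
  refine AlternatingMap.map_linearDependent _ v (fun h => ?_)
  have := h.fintype_card_le_finrank
  simp only [Fintype.card_fin] at this
  omega

/-- The exterior algebra of a finite-dimensional real vector space is finite-dimensional. -/
instance instFiniteExteriorAlgebra {V : Type*} [AddCommGroup V] [Module ℝ V]
    [FiniteDimensional ℝ V] : Module.Finite ℝ (ExteriorAlgebra ℝ V) := by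
  classical
  rw [Module.finite_def]
  set m := Module.finrank ℝ V
  have hfg : ∀ i : ℕ, (⋀[ℝ]^i V).FG := by
    intro i
    induction i with
    | zero =>
      rw [exteriorPower, pow_zero, Submodule.one_eq_span]
      exact Submodule.fg_span_singleton _
    | succ j ih =>
      rw [exteriorPower, pow_succ]
      exact Submodule.FG.mul ih
        (by rw [← Submodule.map_top]; exact Submodule.FG.map _ Module.Finite.fg_top)
  set F : Submodule ℝ (ExteriorAlgebra ℝ V) := ∑ i ∈ Finset.range (m + 1), ⋀[ℝ]^i V with hF
  have hFfg : F.FG := by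
    rw [hF]
    classical
    induction (Finset.range (m + 1)) using Finset.cons_induction with
    | empty => simpa using Submodule.fg_bot
    | cons a s ha ih =>
      rw [Finset.sum_cons, Submodule.add_eq_sup]
      exact Submodule.FG.sup (hfg a) ih
  have hle : ∀ i : ℕ, ⋀[ℝ]^i V ≤ F := by
    intro i
    by_cases h : i ≤ m
    · exact Finset.single_le_sum (f := fun i => ⋀[ℝ]^i V) (fun j _ => bot_le)
        (Finset.mem_range.2 (by omega))
    · rw [exteriorPower_eq_bot_of_finrank_lt (by omega)]
      exact bot_le
  have htop : (⊤ : Submodule ℝ (ExteriorAlgebra ℝ V)) ≤ F := by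
    intro x _
    rw [← DirectSum.sum_support_decompose (fun i : ℕ => ⋀[ℝ]^i V) x]
    exact Submodule.sum_mem _ fun i _ => hle i (DirectSum.decompose (fun i : ℕ => ⋀[ℝ]^i V) x i).2
  exact top_le_iff.mp htop ▸ hFfg

/-- The algebra of (inhomogeneous) exterior forms on `ℝⁿ`: the exterior algebra of the
dual space of `ℝⁿ`.  A `k`-form on `ℝⁿ` is an element of the submodule
`⋀[ℝ]^k (Module.Dual ℝ (Fin n → ℝ))`. -/
abbrev FormAlgebra (n : ℕ) : Type := ExteriorAlgebra ℝ (Module.Dual ℝ (Fin n → ℝ))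

/-- A norm on the (finite-dimensional) algebra of exterior forms on `ℝⁿ`, transported from
`ℝ^d` by a linear equivalence.  All norms on a finite-dimensional real space are equivalent,
so continuity/smoothness of form-valued maps does not depend on this choice. -/
instance instNormedFormAlgebra (n : ℕ) : NormedAddCommGroup (FormAlgebra n) :=
  NormedAddCommGroup.induced _ _ ((Module.finBasis ℝ (FormAlgebra n)).equivFun.toLinearMap)
    (Module.finBasis ℝ (FormAlgebra n)).equivFun.injective

instance instNormedSpaceFormAlgebra (n : ℕ) : NormedSpace ℝ (FormAlgebra n) :=
  NormedSpace.induced ℝ _ _ ((Module.finBasis ℝ (FormAlgebra n)).equivFun.toLinearMap)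

/-- The coordinate 1-forms `dxⁱ` on `ℝⁿ`. -/
def dx {n : ℕ} (i : Fin n) : FormAlgebra n := ExteriorAlgebra.ι ℝ (LinearMap.proj i)

/-- The exterior derivative of a form-valued map on `ℝⁿ`, via the classical coordinate
formula `dω = ∑ᵢ dxⁱ ∧ ∂ᵢω` (where `∂ᵢ` is the partial derivative in the direction of the
`i`-th standard basis vector). -/
def coordExtDeriv {n : ℕ} (ω : (Fin n → ℝ) → FormAlgebra n) (x : Fin n → ℝ) : FormAlgebra n :=
  ∑ i : Fin n, dx i * fderiv ℝ ω x (Pi.single i 1)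

end

/-!
STATEMENT 13: on a connected open set `U ⊆ ℝⁿ`, `n ≥ 4`, if the set where the smooth
2-form `ω` has rank at most 1 (i.e. `ω ∧ ω = 0`) is nowhere dense, then continuous 1-forms
`β`, `β'` with `β ∧ ω = β' ∧ ω` on `U` coincide on `U`; in particular a 1-form `β` with
`dω = β ∧ ω` is unique.
-/
/-- Contracting a 2-vector in the exterior algebra with a dual vector yields a 1-vector. -/
theorem contract_two_mem_range_ι {V : Type*} [AddCommGroup V] [Module ℝ V]
    (f : Module.Dual ℝ V) {Ω : ExteriorAlgebra ℝ V} (hΩ : Ω ∈ ⋀[ℝ]^2 V) :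
    CliffordAlgebra.contractLeft (Q := (0 : QuadraticForm ℝ V)) f Ω ∈
      LinearMap.range (ExteriorAlgebra.ι ℝ (M := V)) := by
  rw [← ExteriorAlgebra.ιMulti_span_fixedDegree] at hΩ
  induction hΩ using Submodule.span_induction with
  | mem x hx =>
    obtain ⟨w, rfl⟩ := hx
    have h2 : ExteriorAlgebra.ιMulti ℝ 2 w
        = ExteriorAlgebra.ι ℝ (w 0) * ExteriorAlgebra.ι ℝ (w 1) := by
      simp [ExteriorAlgebra.ιMulti_apply, List.ofFn_succ, Matrix.vecTail]
    rw [h2, CliffordAlgebra.contractLeft_ι_mul, CliffordAlgebra.contractLeft_ι]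
    refine ⟨f (w 0) • w 1 - f (w 1) • w 0, ?_⟩
    rw [map_sub, map_smul, map_smul]
    congr 1
    rw [Algebra.smul_def, Algebra.commutes]
  | zero => simp
  | add x y _ _ hx hy => rw [map_add]; exact add_mem hx hy
  | smul r x _ hx => rw [map_smul]; exact Submodule.smul_mem _ _ hx

/-- The key algebraic fact: if `Ω` is a 2-vector with `Ω ∧ Ω ≠ 0` and `γ` is a 1-vector
with `γ ∧ Ω = 0`, then `γ = 0`. -/
theorem key_alg {V : Type*} [AddCommGroup V] [Module ℝ V]
    {γ Ω : ExteriorAlgebra ℝ V}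
    (hγ : γ ∈ ⋀[ℝ]^1 V) (hΩ : Ω ∈ ⋀[ℝ]^2 V)
    (hmul : γ * Ω = 0) (hΩ2 : Ω * Ω ≠ 0) : γ = 0 := by
  rw [show (⋀[ℝ]^1 V) = LinearMap.range (ExteriorAlgebra.ι ℝ (M := V)) from pow_one _] at hγ
  obtain ⟨v, rfl⟩ := hγ
  rcases eq_or_ne v 0 with rfl | hv
  · simp
  exfalso
  obtain ⟨f0, hf0⟩ : ∃ f : Module.Dual ℝ V, f v ≠ 0 := by
    by_contra h
    push_neg at h
    exact hv ((Module.forall_dual_apply_eq_zero_iff ℝ v).1 h)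
  set f := (f0 v)⁻¹ • f0 with hf
  have hfv : f v = 1 := by simp [hf, inv_mul_cancel₀ hf0]
  obtain ⟨w, hw⟩ := contract_two_mem_range_ι f hΩ
  have hΩeq : Ω = ExteriorAlgebra.ι ℝ v
      * CliffordAlgebra.contractLeft (Q := (0 : QuadraticForm ℝ V)) f Ω := by
    have h := congrArg (CliffordAlgebra.contractLeft (Q := (0 : QuadraticForm ℝ V)) f) hmul
    rw [map_zero, CliffordAlgebra.contractLeft_ι_mul, hfv, one_smul, sub_eq_zero] at h
    exact h
  apply hΩ2
  rw [hΩeq, ← hw]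
  have hswap : ExteriorAlgebra.ι ℝ w * ExteriorAlgebra.ι ℝ v
      = -(ExteriorAlgebra.ι ℝ v * ExteriorAlgebra.ι ℝ w) := by
    rw [eq_neg_iff_add_eq_zero]
    exact ExteriorAlgebra.ι_add_mul_swap w v
  calc ExteriorAlgebra.ι ℝ v * ExteriorAlgebra.ι ℝ w
        * (ExteriorAlgebra.ι ℝ v * ExteriorAlgebra.ι ℝ w)
      = ExteriorAlgebra.ι ℝ v * (ExteriorAlgebra.ι ℝ w * ExteriorAlgebra.ι ℝ v)
        * ExteriorAlgebra.ι ℝ w := by noncomm_ring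
    _ = ExteriorAlgebra.ι ℝ v * (-(ExteriorAlgebra.ι ℝ v * ExteriorAlgebra.ι ℝ w))
        * ExteriorAlgebra.ι ℝ w := by rw [hswap]
    _ = -((ExteriorAlgebra.ι ℝ v * ExteriorAlgebra.ι ℝ v)
        * (ExteriorAlgebra.ι ℝ w * ExteriorAlgebra.ι ℝ w)) := by noncomm_ring
    _ = 0 := by rw [ExteriorAlgebra.ι_sq_zero]; simp

theorem statement13 (n : ℕ) (hn : 4 ≤ n) (U : Set (Fin n → ℝ)) (hU : IsOpen U)
    (hconn : IsConnected U)
    (ω : (Fin n → ℝ) → FormAlgebra n)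
    (hω2 : ∀ x ∈ U, ω x ∈ ⋀[ℝ]^2 (Module.Dual ℝ (Fin n → ℝ)))
    (hωs : ContDiffOn ℝ (⊤ : ℕ∞) ω U)
    (hnd : IsNowhereDense {x | x ∈ U ∧ ω x ^ 2 = 0})
    (β β' : (Fin n → ℝ) → FormAlgebra n)
    (hβ1 : ∀ x ∈ U, β x ∈ ⋀[ℝ]^1 (Module.Dual ℝ (Fin n → ℝ)))
    (hβ'1 : ∀ x ∈ U, β' x ∈ ⋀[ℝ]^1 (Module.Dual ℝ (Fin n → ℝ)))
    (hβc : ContinuousOn β U) (hβ'c : ContinuousOn β' U)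
    (heq : ∀ x ∈ U, β x * ω x = β' x * ω x) :
    Set.EqOn β β' U := by
  -- On the set `D` where `ω x ^ 2 ≠ 0`, the algebraic lemma gives `β = β'`.
  set D : Set (Fin n → ℝ) := {x | x ∈ U ∧ ω x ^ 2 ≠ 0} with hD
  have hDU : D ⊆ U := fun x hx => hx.1
  have hDeq : ∀ x ∈ D, β x = β' x := by
    rintro x ⟨hxU, hx2⟩
    have h1 : β x - β' x ∈ ⋀[ℝ]^1 (Module.Dual ℝ (Fin n → ℝ)) :=
      sub_mem (hβ1 x hxU) (hβ'1 x hxU)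
    have hm : (β x - β' x) * ω x = 0 := by
      rw [sub_mul, heq x hxU, sub_self]
    have := key_alg h1 (hω2 x hxU) hm (by rwa [← pow_two])
    exact sub_eq_zero.mp this
  -- `D` is dense in `U`.
  have hdense : ∀ x ∈ U, x ∈ closure D := by
    intro x hxU
    rw [mem_closure_iff]
    intro W hW hxW
    by_contra hempty
    rw [Set.not_nonempty_iff_eq_empty] at hempty
    have hsub : W ∩ U ⊆ closure {x | x ∈ U ∧ ω x ^ 2 = 0} := by
      rintro y ⟨hyW, hyU⟩
      by_cases hy : ω y ^ 2 = 0
      · exact subset_closure ⟨hyU, hy⟩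
      · exfalso
        have hmem : y ∈ W ∩ D := ⟨hyW, hyU, hy⟩
        rw [hempty] at hmem
        exact hmem
    have hWU : (W ∩ U).Nonempty := ⟨x, hxW, hxU⟩
    have hopen : IsOpen (W ∩ U) := hW.inter hU
    have : W ∩ U ⊆ interior (closure {x | x ∈ U ∧ ω x ^ 2 = 0}) :=
      hopen.subset_interior_iff.mpr hsub
    rw [show interior (closure {x | x ∈ U ∧ ω x ^ 2 = 0}) = ∅ from hnd] at this
    exact Set.not_nonempty_empty (hWU.mono this)
  -- Conclude by continuity.
  intro x hxU
  have hne : (nhdsWithin x D).NeBot :=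
    mem_closure_iff_nhdsWithin_neBot.mp (hdense x hxU)
  have hβt : Filter.Tendsto β (nhdsWithin x D) (nhds (β x)) :=
    ((hβc x hxU).mono hDU).tendsto
  have hβ't : Filter.Tendsto β (nhdsWithin x D) (nhds (β' x)) := by
    refine Filter.Tendsto.congr' ?_ ((hβ'c x hxU).mono hDU).tendsto
    filter_upwards [self_mem_nhdsWithin] with y hy
    exact (hDeq y hy).symm
  exact tendsto_nhds_unique hβt hβ't
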